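/- Let 0 < ρ < 1 and define for μ₁, μ₂ > 0: SNR₁ = (ρ/(1-ρ²))(μ₁/μ₂ + ρ), SNR₂ = (ρ/(1-ρ²))(μ₂/μ₁ + ρ), and a_j = √(SNR_j/(1+SNR_j)) for j = 1,2. Then a₁·a₂ = ρ, and both a₁ and a₂ lie in the open interval (ρ, 1). -/

import Mathlib

theorem stmt6 (ρ μ₁ μ₂ : ℝ) (hρ : 0 < ρ) (hρ1 : ρ < 1)
    (hμ₁ : 0 < μ₁) (hμ₂ : 0 < μ₂)
    (SNR₁ SNR₂ a₁ a₂ : ℝ)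
    (hS₁ : SNR₁ = ρ / (1 - ρ ^ 2) * (μ₁ / μ₂ + ρ))
    (hS₂ : SNR₂ = ρ / (1 - ρ ^ 2) * (μ₂ / μ₁ + ρ))
    (ha₁ : a₁ = Real.sqrt (SNR₁ / (1 + SNR₁)))
    (ha₂ : a₂ = Real.sqrt (SNR₂ / (1 + SNR₂))) :
    a₁ * a₂ = ρ ∧ a₁ ∈ Set.Ioo ρ 1 ∧ a₂ ∈ Set.Ioo ρ 1 := by
  have h1 : (0:ℝ) < 1 - ρ ^ 2 := by nlinarith
  have hS1pos : 0 < SNR₁ := by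
    rw [hS₁]
    exact mul_pos (div_pos hρ h1) (by positivity)
  have hS2pos : 0 < SNR₂ := by
    rw [hS₂]
    exact mul_pos (div_pos hρ h1) (by positivity)
  have hd1 : (0:ℝ) < 1 + SNR₁ := by linarith
  have hd2 : (0:ℝ) < 1 + SNR₂ := by linarith
  have key1 : SNR₁ * (1 - ρ ^ 2) = ρ * μ₁ / μ₂ + ρ ^ 2 := by
    rw [hS₁]; field_simp
  have key2 : SNR₂ * (1 - ρ ^ 2) = ρ * μ₂ / μ₁ + ρ ^ 2 := by
    rw [hS₂]; field_simp
  have hpos1 : 0 < ρ * μ₁ / μ₂ := by positivity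
  have hpos2 : 0 < ρ * μ₂ / μ₁ := by positivity
  -- bounds on x₁ = SNR₁/(1+SNR₁)
  have hx1lt : SNR₁ / (1 + SNR₁) < 1 := (div_lt_one hd1).mpr (by linarith)
  have hx2lt : SNR₂ / (1 + SNR₂) < 1 := (div_lt_one hd2).mpr (by linarith)
  have hx1gt : ρ ^ 2 < SNR₁ / (1 + SNR₁) := by
    rw [lt_div_iff₀ hd1]; nlinarith
  have hx2gt : ρ ^ 2 < SNR₂ / (1 + SNR₂) := by
    rw [lt_div_iff₀ hd2]; nlinarith
  have hprod : SNR₁ / (1 + SNR₁) * (SNR₂ / (1 + SNR₂)) = ρ ^ 2 := by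
    rw [hS₁, hS₂]
    field_simp
    ring
  have ha1v : a₁ = Real.sqrt (SNR₁ / (1 + SNR₁)) := ha₁
  have hx1nn : 0 ≤ SNR₁ / (1 + SNR₁) := by positivity
  have hmul : a₁ * a₂ = ρ := by
    rw [ha₁, ha₂, ← Real.sqrt_mul hx1nn, hprod, Real.sqrt_sq hρ.le]
  refine ⟨hmul, ⟨?_, ?_⟩, ⟨?_, ?_⟩⟩
  · rw [ha₁]
    calc ρ = Real.sqrt (ρ ^ 2) := (Real.sqrt_sq hρ.le).symm
    _ < _ := Real.sqrt_lt_sqrt (by positivity) hx1gt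
  · rw [ha₁]
    exact (Real.sqrt_lt' one_pos).mpr (by nlinarith)
  · rw [ha₂]
    calc ρ = Real.sqrt (ρ ^ 2) := (Real.sqrt_sq hρ.le).symm
    _ < _ := Real.sqrt_lt_sqrt (by positivity) hx2gt
  · rw [ha₂]
    exact (Real.sqrt_lt' one_pos).mpr (by nlinarith)
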